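/- Let m be a positive natural number and s : Fin m → ℝ with s i ≥ Real.exp 1 for all i. Define the Gini coefficient of a positive weight function w : Fin m → ℝ as G(w) = (∑_{i} ∑_{j} |w i − w j|) / (2 · m · ∑_{i} w i). Then G(fun i => Real.log (s i)) ≤ G(s); that is, the Gini coefficient of the logarithmic stake weights is at most the Gini coefficient of the linear stake weights. -/
import Mathlib


open Finset

/-- The Gini coefficient of a weight function `w` on `m` validators, via the
mean-absolute-difference formula. -/
noncomputable def gini (m : ℕ) (w : Fin m → ℝ) : ℝ :=
  (∑ i, ∑ j, |w i - w j|) / (2 * m * ∑ i, w i)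

/-- Pairwise comparison term. -/
noncomputable def lswFv (a b c : ℝ) : ℝ :=
  |Real.log a - Real.log b| * c - |a - b| * Real.log c

lemma lsw_key {x y : ℝ} (hy : Real.exp 1 ≤ y) (hxy : y ≤ x) :
    Real.log x * y ≤ x * Real.log y := by
  have hx : Real.exp 1 ≤ x := hy.trans hxy
  have hy0 : 0 < y := lt_of_lt_of_le (Real.exp_pos 1) hy
  have hx0 : 0 < x := lt_of_lt_of_le (Real.exp_pos 1) hx
  have h := Real.log_div_self_antitoneOn hy hx hxy
  rw [div_le_div_iff₀ hx0 hy0] at h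
  linarith

lemma lsw_sorted {x y z : ℝ} (hz : Real.exp 1 ≤ z) (hzy : z ≤ y) (hyx : y ≤ x) :
    lswFv x y z + lswFv y x z + lswFv x z y + lswFv z x y + lswFv y z x + lswFv z y x ≤ 0 := by
  have hy : Real.exp 1 ≤ y := hz.trans hzy
  have hx : Real.exp 1 ≤ x := hy.trans hyx
  have hz0 : 0 < z := lt_of_lt_of_le (Real.exp_pos 1) hz
  have hy0 : 0 < y := lt_of_lt_of_le (Real.exp_pos 1) hy
  have hzx : z ≤ x := hzy.trans hyx
  have lyx : Real.log y ≤ Real.log x := Real.log_le_log hy0 hyx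
  have lzy : Real.log z ≤ Real.log y := Real.log_le_log hz0 hzy
  have lzx : Real.log z ≤ Real.log x := lzy.trans lyx
  have key := lsw_key hz hzx
  simp only [lswFv]
  rw [abs_of_nonneg (sub_nonneg.2 lyx), abs_of_nonneg (sub_nonneg.2 hyx),
    abs_of_nonpos (sub_nonpos.2 lyx), abs_of_nonpos (sub_nonpos.2 hyx),
    abs_of_nonneg (sub_nonneg.2 lzx), abs_of_nonneg (sub_nonneg.2 hzx),
    abs_of_nonpos (sub_nonpos.2 lzx), abs_of_nonpos (sub_nonpos.2 hzx),
    abs_of_nonneg (sub_nonneg.2 lzy), abs_of_nonneg (sub_nonneg.2 hzy),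
    abs_of_nonpos (sub_nonpos.2 lzy), abs_of_nonpos (sub_nonpos.2 hzy)]
  nlinarith [key]

lemma lsw_six {a b c : ℝ} (ha : Real.exp 1 ≤ a) (hb : Real.exp 1 ≤ b) (hc : Real.exp 1 ≤ c) :
    lswFv a b c + lswFv b a c + lswFv a c b + lswFv c a b + lswFv b c a + lswFv c b a ≤ 0 := by
  rcases le_total a b with hab | hab <;> rcases le_total b c with hbc | hbc <;>
    rcases le_total a c with hac | hac
  · linarith [lsw_sorted ha hab hbc]
  · linarith [lsw_sorted ha hab hbc]
  · linarith [lsw_sorted ha hac hbc]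
  · linarith [lsw_sorted hc hac hab]
  · linarith [lsw_sorted hb hab hac]
  · linarith [lsw_sorted hb hbc hac]
  · linarith [lsw_sorted hc hbc hab]
  · linarith [lsw_sorted hc hbc hab]

/-- For stakes at least `e`, the Gini coefficient of the logarithmic stake weights
is at most the Gini coefficient of the linear stake weights. -/
theorem lsw_gini_le_linear (m : ℕ) (hm : 0 < m) (s : Fin m → ℝ)
    (hs : ∀ i, Real.exp 1 ≤ s i) :
    gini m (fun i => Real.log (s i)) ≤ gini m s := by
  classical
  set L : Fin m → ℝ := fun i => Real.log (s i) with hLdef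
  have hs0 : ∀ i, 0 < s i := fun i => lt_of_lt_of_le (Real.exp_pos 1) (hs i)
  have hL1 : ∀ i, 1 ≤ L i := by
    intro i
    have := Real.log_le_log (Real.exp_pos 1) (hs i)
    simpa [hLdef, Real.log_exp] using this
  have hmR : (0:ℝ) < m := by exact_mod_cast hm
  have hS : (0:ℝ) < ∑ i, s i :=
    Finset.sum_pos (fun i _ => hs0 i) (Finset.univ_nonempty_iff.2 ⟨⟨0, hm⟩⟩)
  have hT : (0:ℝ) < ∑ i, L i := by
    have : (0:ℝ) < ∑ i : Fin m, 1 := by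
      simpa using hmR
    exact lt_of_lt_of_le this (Finset.sum_le_sum fun i _ => hL1 i)
  -- main combinatorial inequality
  set F : Fin m → Fin m → Fin m → ℝ :=
    fun i j k => |L i - L j| * s k - |s i - s j| * L k with hF
  have swap12 : ∀ g : Fin m → Fin m → Fin m → ℝ,
      (∑ i, ∑ j, ∑ k, g i j k) = ∑ i, ∑ j, ∑ k, g j i k := fun g => Finset.sum_comm
  have swap23 : ∀ g : Fin m → Fin m → Fin m → ℝ,
      (∑ i, ∑ j, ∑ k, g i j k) = ∑ i, ∑ j, ∑ k, g i k j := fun g =>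
    Finset.sum_congr rfl fun i _ => Finset.sum_comm
  set S0 : ℝ := ∑ i, ∑ j, ∑ k, F i j k with hS0
  have e1 : (∑ i, ∑ j, ∑ k, F j i k) = S0 := (swap12 F).symm
  have e2 : (∑ i, ∑ j, ∑ k, F i k j) = S0 := (swap23 F).symm
  have e3 : (∑ i, ∑ j, ∑ k, F k i j) = S0 := by
    rw [← e1]; exact (swap23 (fun i j k => F j i k)).symm
  have e4 : (∑ i, ∑ j, ∑ k, F j k i) = S0 := by
    rw [← e2]; exact (swap12 (fun i j k => F i k j)).symm
  have e5 : (∑ i, ∑ j, ∑ k, F k j i) = S0 := by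
    rw [← e3]; exact (swap12 (fun i j k => F k i j)).symm
  have sum6 : (∑ i, ∑ j, ∑ k,
      (F i j k + F j i k + F i k j + F k i j + F j k i + F k j i)) = 6 * S0 := by
    simp only [Finset.sum_add_distrib]
    rw [e1, e2, e3, e4, e5]
    ring
  have hptwise : ∀ i j k : Fin m,
      F i j k + F j i k + F i k j + F k i j + F j k i + F k j i ≤ 0 := by
    intro i j k
    have := lsw_six (hs i) (hs j) (hs k)
    simpa [hF, lswFv, hLdef] using this
  have h6 : 6 * S0 ≤ 0 := by
    rw [← sum6]
    refine Finset.sum_nonpos fun i _ => Finset.sum_nonpos fun j _ => Finset.sum_nonpos fun k _ => ?_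
    exact hptwise i j k
  have hS0le : S0 ≤ 0 := by linarith
  have hkey : (∑ i, ∑ j, |L i - L j|) * (∑ i, s i) ≤ (∑ i, ∑ j, |s i - s j|) * (∑ i, L i) := by
    have h1 : (∑ i, ∑ j, |L i - L j|) * (∑ i, s i) = ∑ i, ∑ j, ∑ k, |L i - L j| * s k := by
      rw [Finset.sum_mul]
      refine Finset.sum_congr rfl fun i _ => ?_
      rw [Finset.sum_mul]
      exact Finset.sum_congr rfl fun j _ => by rw [Finset.mul_sum]
    have h2 : (∑ i, ∑ j, |s i - s j|) * (∑ i, L i) = ∑ i, ∑ j, ∑ k, |s i - s j| * L k := by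
      rw [Finset.sum_mul]
      refine Finset.sum_congr rfl fun i _ => ?_
      rw [Finset.sum_mul]
      exact Finset.sum_congr rfl fun j _ => by rw [Finset.mul_sum]
    have expand : S0 = (∑ i, ∑ j, |L i - L j|) * (∑ i, s i)
        - (∑ i, ∑ j, |s i - s j|) * (∑ i, L i) := by
      rw [hS0, h1, h2]
      simp only [hF, Finset.sum_sub_distrib]
    linarith [expand ▸ hS0le]
  rw [gini, gini, div_le_div_iff₀ (by positivity) (by positivity)]
  calc (∑ i, ∑ j, |L i - L j|) * (2 * m * ∑ i, s i)
      = (2 * m) * ((∑ i, ∑ j, |L i - L j|) * (∑ i, s i)) := by ring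
    _ ≤ (2 * m) * ((∑ i, ∑ j, |s i - s j|) * (∑ i, L i)) := by
        apply mul_le_mul_of_nonneg_left hkey (by positivity)
    _ = (∑ i, ∑ j, |s i - s j|) * (2 * m * ∑ i, L i) := by ring
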